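/- Let B and τ be as given. Then: (i) σ₁ and σ₃ are algebraically independent over ℤ in B, and the ℤ[σ₁,σ₃]-submodule of B generated by 1 and p is free with basis {1, p}; (ii) the fixed subring B^⟨τ⟩ = {x ∈ B : τ(x) = x} consists exactly of the elements of the form f(σ₁,σ₃)·1 + g(σ₁,σ₃)·p, where f, g ∈ ℤ[S,T] are such that every monomial S^aT^b occurring in f has a+3b even and every monomial S^aT^b occurring in g has a+3b odd. Equivalently, giving B the grading with each z_i of degree 1 (so deg σ₁ = 1, deg σ₃ = 3, deg p = 3), B^⟨τ⟩ is the even-degree part of the free ℤ[σ₁,σ₃]-module ℤ[σ₁,σ₃]·1 ⊕ ℤ[σ₁,σ₃]·p. -/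

import Mathlib

open MvPolynomial

/-- The ring `B = ℤ[z₁,z₂,z₃]/(z₁z₂+z₂z₃+z₃z₁)`. -/
noncomputable abbrev Bring : Type :=
  MvPolynomial (Fin 3) ℤ ⧸
    (Ideal.span {(X 0 * X 1 + X 1 * X 2 + X 2 * X 0 : MvPolynomial (Fin 3) ℤ)})

/-- The images `z₁, z₂, z₃` of the variables in `B`. -/
noncomputable def zB (i : Fin 3) : Bring :=
  Ideal.Quotient.mk _ (X i)

/-- `σ₁ = z₁ + z₂ + z₃`. -/
noncomputable def σ₁B : Bring := zB 0 + zB 1 + zB 2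

/-- `σ₃ = z₁z₂z₃`. -/
noncomputable def σ₃B : Bring := zB 0 * zB 1 * zB 2

/-- `p = z₁²z₂ + z₂²z₃ + z₃²z₁`. -/
noncomputable def pB : Bring := zB 0 ^ 2 * zB 1 + zB 1 ^ 2 * zB 2 + zB 2 ^ 2 * zB 0

/-- Evaluation `ℤ[S,T] → B`, `S ↦ σ₁`, `T ↦ σ₃`. -/
noncomputable def evB (f : MvPolynomial (Fin 2) ℤ) : Bring :=
  MvPolynomial.aeval ![σ₁B, σ₃B] f


open Polynomial
set_option synthInstance.maxHeartbeats 1000000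
set_option maxHeartbeats 1000000

noncomputable section

abbrev R0 := MvPolynomial (Fin 2) ℤ

def sR : R0 := MvPolynomial.X 0
def tR : R0 := MvPolynomial.X 1

def q1 : Polynomial R0 := Polynomial.X ^ 3 - (Polynomial.C sR * Polynomial.X ^ 2 + Polynomial.C tR)

lemma q1_monic : q1.Monic := by
  apply Polynomial.monic_X_pow_sub
  apply lt_of_le_of_lt (Polynomial.degree_add_le _ _)
  simp only [sup_lt_iff]
  constructor
  · apply lt_of_le_of_lt (Polynomial.degree_mul_le _ _)
    apply lt_of_le_of_lt (add_le_add Polynomial.degree_C_le (Polynomial.degree_X_pow _).le)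
    norm_num
  · exact lt_of_le_of_lt Polynomial.degree_C_le (by norm_num)

abbrev A1 := AdjoinRoot q1
def ZA1 : A1 := AdjoinRoot.root q1
def sA1 : A1 := AdjoinRoot.of q1 sR
def tA1 : A1 := AdjoinRoot.of q1 tR
def YA1 : A1 := sA1 - ZA1

lemma hZ3_A1 : ZA1 ^ 3 = sA1 * ZA1 ^ 2 + tA1 := by
  rw [← sub_eq_zero]
  have : ZA1 ^ 3 - (sA1 * ZA1 ^ 2 + tA1)
      = AdjoinRoot.mk q1 (Polynomial.X ^ 3 - (Polynomial.C sR * Polynomial.X ^ 2 + Polynomial.C tR)) := by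
    simp only [map_sub, map_add, map_mul, map_pow, AdjoinRoot.mk_X, AdjoinRoot.mk_C]
    rfl
  rw [this, AdjoinRoot.mk_eq_zero]
  exact ⟨1, by rw [q1]; ring⟩

def q2 : Polynomial A1 := Polynomial.X ^ 2 - (Polynomial.C YA1 * Polynomial.X + Polynomial.C (YA1 * ZA1))

lemma q2_monic : q2.Monic := by
  apply Polynomial.monic_X_pow_sub
  apply lt_of_le_of_lt (Polynomial.degree_add_le _ _)
  simp only [sup_lt_iff]
  constructor
  · apply lt_of_le_of_lt (Polynomial.degree_mul_le _ _)
    apply lt_of_le_of_lt (add_le_add Polynomial.degree_C_le Polynomial.degree_X_le)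
    norm_num
  · exact lt_of_le_of_lt Polynomial.degree_C_le (by norm_num)

abbrev Aring := AdjoinRoot q2
def xA : Aring := AdjoinRoot.root q2
def am1 : A1 →+* Aring := AdjoinRoot.of q2
def amA : R0 →+* Aring := (AdjoinRoot.of q2).comp (AdjoinRoot.of q1)
def sA : Aring := amA sR
def tA : Aring := amA tR
def ZA : Aring := am1 ZA1

lemma hYam : am1 YA1 = sA - ZA := by rw [YA1, am1, map_sub]; rfl

lemma hx2 : xA ^ 2 = (sA - ZA) * xA + (sA - ZA) * ZA := by
  rw [← hYam, ← sub_eq_zero]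
  have : xA ^ 2 - (am1 YA1 * xA + am1 YA1 * (am1 ZA1))
      = AdjoinRoot.mk q2 (Polynomial.X ^ 2 - (Polynomial.C YA1 * Polynomial.X + Polynomial.C (YA1 * ZA1))) := by
    simp only [map_sub, map_add, map_mul, map_pow, AdjoinRoot.mk_X, AdjoinRoot.mk_C]
    rfl
  rw [show (ZA : Aring) = am1 ZA1 from rfl, this, AdjoinRoot.mk_eq_zero]
  exact ⟨1, by rw [q2]; ring⟩

lemma hZ3_A : ZA ^ 3 = sA * ZA ^ 2 + tA := by
  have := congrArg am1 hZ3_A1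
  simp only [map_pow, map_add, map_mul] at this
  exact this

end

noncomputable section

def pb1 : PowerBasis R0 A1 := AdjoinRoot.powerBasis' q1_monic

lemma q1_natDegree : q1.natDegree = 3 := by
  rw [q1]
  rw [Polynomial.natDegree_sub_eq_left_of_natDegree_lt]
  · exact Polynomial.natDegree_X_pow 3
  · rw [Polynomial.natDegree_X_pow]
    refine lt_of_le_of_lt (Polynomial.natDegree_add_le _ _) ?_
    refine lt_of_le_of_lt (max_le ?_ ?_) (by norm_num : 2 < 3)
    · exact le_trans (Polynomial.natDegree_mul_le) (by simp)
    · simp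

lemma pb1_dim : pb1.dim = 3 := q1_natDegree

instance : Nontrivial A1 :=
  AdjoinRoot.nontrivial q1 (by
    rw [Polynomial.degree_eq_natDegree q1_monic.ne_zero, q1_natDegree]
    norm_num)

def pb2 : PowerBasis A1 Aring := AdjoinRoot.powerBasis' q2_monic

lemma q2_natDegree : q2.natDegree = 2 := by
  rw [q2]
  rw [Polynomial.natDegree_sub_eq_left_of_natDegree_lt]
  · exact Polynomial.natDegree_X_pow 2
  · rw [Polynomial.natDegree_X_pow]
    refine lt_of_le_of_lt (Polynomial.natDegree_add_le _ _) ?_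
    refine lt_of_le_of_lt (max_le ?_ ?_) (by norm_num : 1 < 2)
    · exact le_trans (Polynomial.natDegree_mul_le) (by simp)
    · rw [Polynomial.natDegree_C]; norm_num

lemma pb2_dim : pb2.dim = 2 := q2_natDegree

def b1 : Module.Basis (Fin 3) R0 A1 := pb1.basis.reindex (finCongr pb1_dim)
def b2 : Module.Basis (Fin 2) A1 Aring := pb2.basis.reindex (finCongr pb2_dim)

lemma b1_apply (i : Fin 3) : b1 i = ZA1 ^ (i : ℕ) := by
  rw [b1, Module.Basis.reindex_apply, pb1.coe_basis]
  rfl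

lemma b2_apply (i : Fin 2) : b2 i = xA ^ (i : ℕ) := by
  rw [b2, Module.Basis.reindex_apply, pb2.coe_basis]
  rfl

lemma b1_0 : b1 0 = 1 := by rw [b1_apply]; norm_num
lemma b1_1 : b1 1 = ZA1 := by rw [b1_apply]; norm_num
lemma b1_2 : b1 2 = ZA1 ^ 2 := by rw [b1_apply]; norm_num
lemma b2_0 : b2 0 = 1 := by rw [b2_apply]; norm_num
lemma b2_1 : b2 1 = xA := by rw [b2_apply]; norm_num

lemma amA_of (r : R0) : am1 (AdjoinRoot.of q1 r) = amA r := rfl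
lemma ZA_def : am1 ZA1 = ZA := rfl

lemma indep2 (e0 e1 : A1) (h : am1 e0 + am1 e1 * xA = 0) : e0 = 0 ∧ e1 = 0 := by
  have hb := Fintype.linearIndependent_iff.mp b2.linearIndependent ![e0, e1]
  have hsum : ∑ i : Fin 2, (![e0, e1] i) • b2 i = 0 := by
    rw [Fin.sum_univ_two]
    simp only [Matrix.cons_val_zero, Matrix.cons_val_one, Matrix.head_cons, b2_0, b2_1]
    rw [Algebra.smul_def, Algebra.smul_def, AdjoinRoot.algebraMap_eq, mul_one]
    exact h
  exact ⟨hb hsum 0, hb hsum 1⟩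

lemma indep3 (c0 c1 c2 : R0) (h : AdjoinRoot.of q1 c0 + AdjoinRoot.of q1 c1 * ZA1
    + AdjoinRoot.of q1 c2 * ZA1 ^ 2 = 0) : c0 = 0 ∧ c1 = 0 ∧ c2 = 0 := by
  have hb := Fintype.linearIndependent_iff.mp b1.linearIndependent ![c0, c1, c2]
  have hsum : ∑ i : Fin 3, (![c0, c1, c2] i) • b1 i = 0 := by
    rw [Fin.sum_univ_three]
    simp only [Matrix.cons_val_zero, Matrix.cons_val_one, Matrix.head_cons,
      Matrix.cons_val_two, Matrix.tail_cons, b1_0, b1_1, b1_2]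
    rw [Algebra.smul_def, Algebra.smul_def, Algebra.smul_def, AdjoinRoot.algebraMap_eq, mul_one]
    exact h
  exact ⟨hb hsum 0, hb hsum 1, hb hsum 2⟩

lemma indep6 (c0 c1 c2 d0 d1 d2 : R0)
    (h : amA c0 + amA c1 * ZA + amA c2 * ZA ^ 2 + amA d0 * xA + amA d1 * xA * ZA
      + amA d2 * xA * ZA ^ 2 = 0) :
    c0 = 0 ∧ c1 = 0 ∧ c2 = 0 ∧ d0 = 0 ∧ d1 = 0 ∧ d2 = 0 := by
  have key : am1 (AdjoinRoot.of q1 c0 + AdjoinRoot.of q1 c1 * ZA1 + AdjoinRoot.of q1 c2 * ZA1 ^ 2)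
      + am1 (AdjoinRoot.of q1 d0 + AdjoinRoot.of q1 d1 * ZA1 + AdjoinRoot.of q1 d2 * ZA1 ^ 2) * xA = 0 := by
    simp only [map_add, map_mul, map_pow, amA_of, ZA_def]
    linear_combination h
  obtain ⟨hE0, hE1⟩ := indep2 _ _ key
  obtain ⟨a0, a1, a2⟩ := indep3 _ _ _ hE0
  obtain ⟨e0, e1, e2⟩ := indep3 _ _ _ hE1
  exact ⟨a0, a1, a2, e0, e1, e2⟩

lemma coords (a : Aring) : ∃ c0 c1 c2 d0 d1 d2 : R0,
    a = amA c0 + amA c1 * ZA + amA c2 * ZA ^ 2 + amA d0 * xA + amA d1 * xA * ZA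
      + amA d2 * xA * ZA ^ 2 := by
  have h2 : ∀ y : Aring, ∃ e0 e1 : A1, y = am1 e0 + am1 e1 * xA := by
    intro y
    refine ⟨b2.repr y 0, b2.repr y 1, ?_⟩
    have := b2.sum_repr y
    rw [Fin.sum_univ_two, b2_0, b2_1] at this
    rw [Algebra.smul_def, Algebra.smul_def, AdjoinRoot.algebraMap_eq, mul_one] at this
    exact this.symm
  have h3 : ∀ e : A1, ∃ c0 c1 c2 : R0, e = AdjoinRoot.of q1 c0 + AdjoinRoot.of q1 c1 * ZA1
      + AdjoinRoot.of q1 c2 * ZA1 ^ 2 := by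
    intro e
    refine ⟨b1.repr e 0, b1.repr e 1, b1.repr e 2, ?_⟩
    have := b1.sum_repr e
    rw [Fin.sum_univ_three, b1_0, b1_1, b1_2] at this
    rw [Algebra.smul_def, Algebra.smul_def, Algebra.smul_def,
      AdjoinRoot.algebraMap_eq, mul_one] at this
    exact this.symm
  obtain ⟨e0, e1, hy⟩ := h2 a
  obtain ⟨c0, c1, c2, he0⟩ := h3 e0
  obtain ⟨d0, d1, d2, he1⟩ := h3 e1
  refine ⟨c0, c1, c2, d0, d1, d2, ?_⟩
  rw [hy, he0, he1]
  simp only [map_add, map_mul, map_pow, amA_of, ZA_def]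
  ring

end

noncomputable section


def e2p : MvPolynomial (Fin 3) ℤ := MvPolynomial.X 0 * MvPolynomial.X 1 + MvPolynomial.X 1 * MvPolynomial.X 2 + MvPolynomial.X 2 * MvPolynomial.X 0
def mkB : MvPolynomial (Fin 3) ℤ →+* Bring := Ideal.Quotient.mk (Ideal.span {e2p})

lemma mkB_X (i : Fin 3) : mkB (MvPolynomial.X i) = zB i := rfl

lemma mkB_eq (P Q : MvPolynomial (Fin 3) ℤ) (c : MvPolynomial (Fin 3) ℤ)
    (h : P - Q = c * e2p) : mkB P = mkB Q := by
  rw [mkB]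
  refine Ideal.Quotient.eq.mpr ?_
  rw [Ideal.mem_span_singleton, h]
  exact Dvd.intro_left c rfl

-- the hom Φ : MvPolynomial (Fin 3) ℤ → Aring
def ΦA : MvPolynomial (Fin 3) ℤ →+* Aring :=
  (MvPolynomial.eval₂Hom (Int.castRingHom Aring) ![xA, (sA - ZA) - xA, ZA])

lemma ΦA_e2p : ΦA e2p = 0 := by
  rw [e2p, ΦA]
  simp only [map_add, map_mul, eval₂Hom_X']
  simp only [Matrix.cons_val_zero, Matrix.cons_val_one, Matrix.head_cons,
    Matrix.cons_val_two, Matrix.tail_cons]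
  linear_combination -hx2

def φB : Bring →+* Aring :=
  Ideal.Quotient.lift _ ΦA (by
    intro a ha
    rw [Ideal.mem_span_singleton] at ha
    obtain ⟨c, hc⟩ := ha
    rw [hc, map_mul]
    have : ΦA (MvPolynomial.X 0 * MvPolynomial.X 1 + MvPolynomial.X 1 * MvPolynomial.X 2 + MvPolynomial.X 2 * MvPolynomial.X 0 : MvPolynomial (Fin 3) ℤ) = 0 := ΦA_e2p
    rw [this, zero_mul])

lemma φB_z0 : φB (zB 0) = xA := by
  rw [zB, φB]
  erw [Ideal.Quotient.lift_mk]
  simp [ΦA]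

lemma φB_z1 : φB (zB 1) = (sA - ZA) - xA := by
  rw [zB, φB]
  erw [Ideal.Quotient.lift_mk]
  simp [ΦA]

lemma φB_z2 : φB (zB 2) = ZA := by
  rw [zB, φB]
  erw [Ideal.Quotient.lift_mk]
  simp [ΦA]

end

noncomputable section

def evBh : R0 →+* Bring := (MvPolynomial.eval₂Hom (Int.castRingHom Bring) ![σ₁B, σ₃B])

lemma evBh_s : evBh sR = σ₁B := by simp [evBh, sR]
lemma evBh_t : evBh tR = σ₃B := by simp [evBh, tR]
lemma evBh_eq (f : R0) : evBh f = evB f := by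
  rw [evB, MvPolynomial.aeval_def, evBh]
  rfl

lemma q1_eval : Polynomial.eval₂ evBh (zB 2) q1 = 0 := by
  rw [q1]
  simp only [Polynomial.eval₂_sub, Polynomial.eval₂_add, Polynomial.eval₂_mul,
    Polynomial.eval₂_pow, Polynomial.eval₂_X, Polynomial.eval₂_C, evBh_s, evBh_t]
  rw [σ₁B, σ₃B]
  have hz : ∀ i, zB i = mkB (MvPolynomial.X i) := fun _ => rfl
  simp only [hz, ← map_pow, ← map_mul, ← map_add, ← map_sub]
  rw [show (0 : Bring) = mkB 0 from (map_zero mkB).symm]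
  exact mkB_eq _ _ (-(MvPolynomial.X 2)) (by rw [e2p]; ring)

def ψ1 : A1 →+* Bring := AdjoinRoot.lift evBh (zB 2) q1_eval

lemma ψ1_Z : ψ1 ZA1 = zB 2 := AdjoinRoot.lift_root q1_eval
lemma ψ1_of (r : R0) : ψ1 (AdjoinRoot.of q1 r) = evBh r := AdjoinRoot.lift_of q1_eval

lemma q2_eval : Polynomial.eval₂ ψ1 (zB 0) q2 = 0 := by
  rw [q2]
  simp only [Polynomial.eval₂_sub, Polynomial.eval₂_add, Polynomial.eval₂_mul,
    Polynomial.eval₂_pow, Polynomial.eval₂_X, Polynomial.eval₂_C]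
  have hY : ψ1 YA1 = σ₁B - zB 2 := by
    rw [YA1, map_sub, ψ1_Z, sA1, ψ1_of, evBh_s]
  rw [map_mul, hY, ψ1_Z, σ₁B]
  have hz : ∀ i, zB i = mkB (MvPolynomial.X i) := fun _ => rfl
  simp only [hz, ← map_pow, ← map_mul, ← map_add, ← map_sub]
  rw [show (0 : Bring) = mkB 0 from (map_zero mkB).symm]
  exact mkB_eq _ _ (-1) (by rw [e2p]; ring)

def ψB : Aring →+* Bring := AdjoinRoot.lift ψ1 (zB 0) q2_eval

lemma ψB_x : ψB xA = zB 0 := AdjoinRoot.lift_root q2_eval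
lemma ψB_of (e : A1) : ψB (am1 e) = ψ1 e := AdjoinRoot.lift_of q2_eval
lemma ψB_Z : ψB ZA = zB 2 := by rw [show ZA = am1 ZA1 from rfl, ψB_of, ψ1_Z]
lemma ψB_s : ψB sA = σ₁B := by
  rw [show sA = am1 (AdjoinRoot.of q1 sR) from rfl, ψB_of, ψ1_of, evBh_s]
lemma ψB_t : ψB tA = σ₃B := by
  rw [show tA = am1 (AdjoinRoot.of q1 tR) from rfl, ψB_of, ψ1_of, evBh_t]
lemma ψB_amA (r : R0) : ψB (amA r) = evBh r := by
  rw [show amA r = am1 (AdjoinRoot.of q1 r) from rfl, ψB_of, ψ1_of]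

-- ψB ∘ φB = id
lemma ψφ (x : Bring) : ψB (φB x) = x := by
  have : (ψB.comp φB) = RingHom.id Bring := by
    refine Ideal.Quotient.ringHom_ext ?_
    refine MvPolynomial.ringHom_ext (fun r => ?_) (fun i => ?_)
    · simp only [RingHom.comp_apply]
      rw [show (MvPolynomial.C r : MvPolynomial (Fin 3) ℤ) = (r : MvPolynomial (Fin 3) ℤ) by
        simp [MvPolynomial.C_eq_coe_nat]]
      simp [map_intCast]
    · simp only [RingHom.comp_apply, RingHom.id_apply]
      fin_cases i
      · show ψB (φB (zB 0)) = zB 0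
        rw [φB_z0, ψB_x]
      · show ψB (φB (zB 1)) = zB 1
        rw [φB_z1, map_sub, map_sub, ψB_x, ψB_s, ψB_Z, σ₁B]; ring
      · show ψB (φB (zB 2)) = zB 2
        rw [φB_z2, ψB_Z]
  exact DFunLike.congr_fun this x

lemma φB_inj : Function.Injective φB := Function.LeftInverse.injective ψφ

end

noncomputable section

lemma φB_σ₁ : φB σ₁B = sA := by
  rw [σ₁B, map_add, map_add, φB_z0, φB_z1, φB_z2]; ring

lemma φB_σ₃ : φB σ₃B = tA := by
  rw [σ₃B, map_mul, map_mul, φB_z0, φB_z1, φB_z2]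
  linear_combination (-(ZA : Aring)) * hx2 + hZ3_A

lemma φB_evB (f : R0) : φB (evB f) = amA f := by
  have : φB.comp evBh = amA := by
    refine MvPolynomial.ringHom_ext (fun r => ?_) (fun i => ?_)
    · simp [map_intCast, show (MvPolynomial.C r : R0) = (r : R0) by simp]
    · fin_cases i
      · show φB (evBh sR) = amA sR
        rw [evBh_s, φB_σ₁]; rfl
      · show φB (evBh tR) = amA tR
        rw [evBh_t, φB_σ₃]; rfl
  rw [← evBh_eq]
  exact DFunLike.congr_fun this f

lemma φB_pB : φB pB = sA ^ 2 * ZA - sA * ZA ^ 2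
    + (3 * ZA ^ 2 - 2 * sA * ZA) * xA := by
  rw [pB]
  simp only [map_add, map_mul, map_pow, φB_z0, φB_z1, φB_z2]
  linear_combination (ZA - xA) * hx2

end

noncomputable section

lemma part2 (f g : R0) (h : evB f + evB g * pB = 0) : f = 0 ∧ g = 0 := by
  have hA : amA f + amA g * φB pB = 0 := by
    rw [← φB_evB, ← φB_evB, ← map_mul, ← map_add, h, map_zero]
  rw [φB_pB] at hA
  have key : amA f + amA (sR ^ 2 * g) * ZA + amA (-(sR * g)) * ZA ^ 2 + amA 0 * xA
      + amA (-(2 * sR * g)) * xA * ZA + amA (3 * g) * xA * ZA ^ 2 = 0 := by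
    simp only [map_mul, map_neg, map_pow, map_zero, map_ofNat,
      show amA sR = sA from rfl]
    linear_combination hA
  obtain ⟨h0, h1, h2, h3, h4, h5⟩ := indep6 _ _ _ _ _ _ key
  refine ⟨h0, ?_⟩
  have : (3 : R0) * g = 0 := h5
  have h3ne : (3 : R0) ≠ 0 := by
    intro hcon
    have := MvPolynomial.C_injective (Fin 2) ℤ
      (show MvPolynomial.C (3:ℤ) = MvPolynomial.C (0:ℤ) by rw [map_ofNat, map_zero]; exact hcon)
    norm_num at this
  rcases mul_eq_zero.mp this with hc | hc
  · exact absurd hc h3ne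
  · exact hc

end

noncomputable section

def σR : R0 →+* R0 :=
  (MvPolynomial.eval₂Hom MvPolynomial.C (fun i => -MvPolynomial.X i))

lemma σR_X (i : Fin 2) : σR (MvPolynomial.X i) = -MvPolynomial.X i := by simp [σR]
lemma σR_C (r : ℤ) : σR (MvPolynomial.C r) = MvPolynomial.C r := by simp [σR]

lemma σR_monomial (m : Fin 2 →₀ ℕ) (c : ℤ) :
    σR (MvPolynomial.monomial m c) = (-1) ^ (m 0 + m 1) * MvPolynomial.monomial m c := by
  rw [σR, MvPolynomial.eval₂Hom_monomial]
  rw [Finsupp.prod_fintype _ _ (fun i => pow_zero _)]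
  rw [Fin.prod_univ_two]
  rw [MvPolynomial.monomial_eq]
  rw [Finsupp.prod_fintype _ _ (fun i => pow_zero _), Fin.prod_univ_two, pow_add]
  ring

lemma σR_coeff (f : R0) (m : Fin 2 →₀ ℕ) :
    MvPolynomial.coeff m (σR f) = (-1) ^ (m 0 + m 1) * MvPolynomial.coeff m f := by
  induction f using MvPolynomial.induction_on' with
  | monomial n a =>
    rw [σR_monomial,
      show ((-1:R0)) ^ (n 0 + n 1) = MvPolynomial.C ((-1:ℤ) ^ (n 0 + n 1)) by
        rw [map_pow]; simp,
      MvPolynomial.C_mul_monomial, MvPolynomial.coeff_monomial, MvPolynomial.coeff_monomial]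
    by_cases h : n = m
    · subst h; simp
    · simp [h]
  | add p q hp hq =>
    rw [map_add, MvPolynomial.coeff_add, MvPolynomial.coeff_add, hp, hq]
    ring

end

noncomputable section

lemma even_iff_σR (f : R0) :
    (∀ m ∈ f.support, Even (m 0 + 3 * m 1)) ↔ σR f = f := by
  constructor
  · intro h
    apply MvPolynomial.ext
    intro m
    rw [σR_coeff]
    by_cases hm : m ∈ f.support
    · have := h m hm
      have heven : Even (m 0 + m 1) := by
        rw [Nat.even_iff] at this ⊢
        omega
      rw [heven.neg_one_pow, one_mul]
    · rw [MvPolynomial.notMem_support_iff] at hm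
      rw [hm]; ring
  · intro h m hm
    rw [MvPolynomial.mem_support_iff] at hm
    by_contra hodd
    have hodd' : Odd (m 0 + m 1) := by
      rw [Nat.odd_iff]
      rw [Nat.even_iff] at hodd
      omega
    have := congrArg (MvPolynomial.coeff m) h
    rw [σR_coeff, hodd'.neg_one_pow] at this
    apply hm
    omega

lemma odd_iff_σR (f : R0) :
    (∀ m ∈ f.support, Odd (m 0 + 3 * m 1)) ↔ σR f = -f := by
  constructor
  · intro h
    apply MvPolynomial.ext
    intro m
    rw [σR_coeff, MvPolynomial.coeff_neg]
    by_cases hm : m ∈ f.support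
    · have := h m hm
      have hodd : Odd (m 0 + m 1) := by
        rw [Nat.odd_iff] at this ⊢
        omega
      rw [hodd.neg_one_pow]; ring
    · rw [MvPolynomial.notMem_support_iff] at hm
      rw [hm]; ring
  · intro h m hm
    rw [MvPolynomial.mem_support_iff] at hm
    by_contra heven
    have heven' : Even (m 0 + m 1) := by
      rw [Nat.even_iff]
      rw [Nat.odd_iff] at heven
      omega
    have := congrArg (MvPolynomial.coeff m) h
    rw [σR_coeff, heven'.neg_one_pow, one_mul, MvPolynomial.coeff_neg] at this
    apply hm
    omega

lemma σR_σR (f : R0) : σR (σR f) = f := by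
  have : σR.comp σR = RingHom.id R0 := by
    refine MvPolynomial.ringHom_ext (fun r => ?_) (fun i => ?_)
    · simp [σR_C]
    · simp [σR_X]
  exact DFunLike.congr_fun this f

lemma σR_s : σR sR = -sR := σR_X 0
lemma σR_t : σR tR = -tR := σR_X 1

lemma three_dvd_of (d1 d2 : R0) (h : 3 * d1 + 2 * sR * d2 = 0) : ∃ g : R0, d2 = 3 * g := by
  set map3 := MvPolynomial.map (σ := Fin 2) (Int.castRingHom (ZMod 3)) with hm3
  have h3 : (3 : MvPolynomial (Fin 2) (ZMod 3)) = 0 := by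
    rw [show (3 : MvPolynomial (Fin 2) (ZMod 3)) = MvPolynomial.C (3 : ZMod 3) from
      (map_ofNat MvPolynomial.C 3).symm]
    rw [show (3 : ZMod 3) = 0 from by decide, map_zero]
  have hmap : (3 : MvPolynomial (Fin 2) (ZMod 3)) * map3 d1
      + 2 * MvPolynomial.X 0 * map3 d2 = 0 := by
    have := congrArg map3 h
    simp only [map_add, map_mul, map_zero, map_ofNat, hm3] at this
    rw [← this, sR]
    simp [MvPolynomial.map_X, hm3]
  have hX : (MvPolynomial.X 0 : MvPolynomial (Fin 2) (ZMod 3)) * map3 d2 = 0 := by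
    linear_combination 2 * hmap + (-(MvPolynomial.X 0 * map3 d2) - 2 * map3 d1) * h3
  have hm0 : map3 d2 = 0 := by
    rcases mul_eq_zero.mp hX with hc | hc
    · exact absurd hc (MvPolynomial.X_ne_zero 0)
    · exact hc
  have hcoeff : ∀ m, (3:ℤ) ∣ MvPolynomial.coeff m d2 := by
    intro m
    have := congrArg (MvPolynomial.coeff m) hm0
    rw [MvPolynomial.coeff_map, MvPolynomial.coeff_zero] at this
    exact (ZMod.intCast_zmod_eq_zero_iff_dvd _ 3).mp this
  obtain ⟨g, hg⟩ := (MvPolynomial.C_dvd_iff_dvd_coeff (3:ℤ) d2).mpr hcoeff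
  refine ⟨g, ?_⟩
  rw [hg, map_ofNat]

end

noncomputable section

lemma three_ne : (3 : R0) ≠ 0 := by
  intro hcon
  have := MvPolynomial.C_injective (Fin 2) ℤ
    (show MvPolynomial.C (3:ℤ) = MvPolynomial.C (0:ℤ) by rw [map_ofNat, map_zero]; exact hcon)
  norm_num at this

lemma cancel3 (u : R0) (h : 3 * u = 0) : u = 0 := by
  rcases mul_eq_zero.mp h with hc | hc
  · exact absurd hc three_ne
  · exact hc

section Tau

variable {τ : Bring ≃+* Bring}
variable (h1 : τ (zB 0) = -zB 2) (h2 : τ (zB 1) = -zB 0) (h3 : τ (zB 2) = -zB 1)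

def TA (τ : Bring ≃+* Bring) : Aring →+* Aring := (φB.comp (τ : Bring →+* Bring)).comp ψB

lemma TA_φB (x : Bring) : TA τ (φB x) = φB (τ x) := by
  rw [TA]
  simp only [RingHom.comp_apply, RingHom.coe_coe]
  rw [ψφ]

include h1 h2 h3

lemma τσ₁ : τ σ₁B = -σ₁B := by
  rw [σ₁B, map_add, map_add, h1, h2, h3]; ring

lemma τσ₃ : τ σ₃B = -σ₃B := by
  rw [σ₃B, map_mul, map_mul, h1, h2, h3]; ring

lemma τpB : τ pB = -pB := by
  rw [pB, map_add, map_add, map_mul, map_mul, map_mul, map_pow, map_pow, map_pow, h1, h2, h3]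
  ring

lemma τevB (f : R0) : τ (evB f) = evB (σR f) := by
  have : (τ : Bring →+* Bring).comp evBh = evBh.comp σR := by
    refine MvPolynomial.ringHom_ext (fun r => ?_) (fun i => ?_)
    · simp only [RingHom.comp_apply]
      rw [show (MvPolynomial.C r : R0) = (r : R0) by simp, map_intCast, σR]
      simp [map_intCast]
    · fin_cases i
      · show τ (evBh sR) = evBh (σR sR)
        rw [evBh_s, σR_s, map_neg, evBh_s, τσ₁ h1 h2 h3]
      · show τ (evBh tR) = evBh (σR tR)
        rw [evBh_t, σR_t, map_neg, evBh_t, τσ₃ h1 h2 h3]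
  rw [← evBh_eq, ← evBh_eq]
  exact DFunLike.congr_fun this f

lemma TA_amA (r : R0) : TA τ (amA r) = amA (σR r) := by
  have : (TA τ).comp amA = amA.comp σR := by
    refine MvPolynomial.ringHom_ext (fun r => ?_) (fun i => ?_)
    · simp only [RingHom.comp_apply]
      rw [show (MvPolynomial.C r : R0) = (r : R0) by simp, map_intCast, map_intCast, σR]
      simp [map_intCast]
    · fin_cases i
      · show TA τ (amA sR) = amA (σR sR)
        rw [show amA sR = φB σ₁B from φB_σ₁.symm, TA_φB, τσ₁ h1 h2 h3, map_neg, φB_σ₁,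
          σR_s, map_neg]
        rfl
      · show TA τ (amA tR) = amA (σR tR)
        rw [show amA tR = φB σ₃B from φB_σ₃.symm, TA_φB, τσ₃ h1 h2 h3, map_neg, φB_σ₃,
          σR_t, map_neg]
        rfl
  exact DFunLike.congr_fun this r

lemma TA_Z : TA τ ZA = xA + ZA - sA := by
  rw [show (ZA : Aring) = φB (zB 2) from φB_z2.symm, TA_φB, h3, map_neg, φB_z1, φB_z2]
  ring

lemma TA_x : TA τ xA = -ZA := by
  rw [show (xA : Aring) = φB (zB 0) from φB_z0.symm, TA_φB, h1, map_neg, φB_z2]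

lemma Texpand (c0 c1 c2 d0 d1 d2 : R0) :
    TA τ (amA c0 + amA c1 * ZA + amA c2 * ZA ^ 2 + amA d0 * xA + amA d1 * xA * ZA
      + amA d2 * xA * ZA ^ 2)
    = amA (σR c0 - sR * σR c1 + sR ^ 2 * σR c2)
      + amA (σR c1 - sR * σR c2 - σR d0 + sR * σR d1 - sR ^ 2 * σR d2) * ZA
      + amA (-σR d1 + sR * σR d2) * ZA ^ 2
      + amA (σR c1 - sR * σR c2) * xA
      + amA (σR c2 - σR d1 + sR * σR d2) * xA * ZA
      + amA (-σR d2) * xA * ZA ^ 2 := by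
  simp only [map_add, map_mul, map_pow, map_sub, map_neg, TA_amA h1 h2 h3, TA_Z h1 h2 h3,
    TA_x h1 h2 h3, show amA sR = sA from rfl]
  linear_combination (amA (σR c2) - amA (σR d2) * ZA) * hx2

lemma fixed_rep (x : Bring) (hx : τ x = x) :
    ∃ f g : R0, σR f = f ∧ σR g = -g ∧ x = evB f + evB g * pB := by
  obtain ⟨c0, c1, c2, d0, d1, d2, ha⟩ := coords (φB x)
  have hTa : TA τ (φB x) = φB x := by rw [TA_φB, hx]
  have hexp := Texpand h1 h2 h3 c0 c1 c2 d0 d1 d2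
  rw [← ha, hTa, ha] at hexp
  -- hexp : coords expression = expanded expression
  have hdiff : amA (σR c0 - sR * σR c1 + sR ^ 2 * σR c2 - c0)
      + amA (σR c1 - sR * σR c2 - σR d0 + sR * σR d1 - sR ^ 2 * σR d2 - c1) * ZA
      + amA (-σR d1 + sR * σR d2 - c2) * ZA ^ 2
      + amA (σR c1 - sR * σR c2 - d0) * xA
      + amA (σR c2 - σR d1 + sR * σR d2 - d1) * xA * ZA
      + amA (-σR d2 - d2) * xA * ZA ^ 2 = 0 := by
    simp only [map_sub, map_add, map_neg, map_mul, map_pow, show amA sR = sA from rfl]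
    have hexp' := hexp
    simp only [map_sub, map_add, map_neg, map_mul, map_pow, show amA sR = sA from rfl] at hexp'
    linear_combination -hexp' 
  obtain ⟨e1, e2, e3, e4, e5, e6⟩ := indep6 _ _ _ _ _ _ hdiff
  rw [sub_eq_zero] at e1 e2 e3 e4 e5 e6
  -- apply σR to various equations
  have σmap : ∀ (u v : R0), u = v → σR u = σR v := fun u v h => congrArg σR h
  have e3' := σmap _ _ e3
  simp only [map_add, map_sub, map_neg, map_mul, map_pow, σR_s, σR_σR] at e3'
  have e6' := σmap _ _ e6
  simp only [map_add, map_sub, map_neg, map_mul, map_pow, σR_s, σR_σR] at e6'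
  -- e6 : -σR d2 = d2, so σR d2 = -d2
  have hσd2 : σR d2 = -d2 := by linear_combination -e6
  -- star : σR d1 = -2*d1 - 2*sR*d2
  have star : σR d1 = -2 * d1 - 2 * sR * d2 := by
    linear_combination -e5 - e3' + sR * hσd2
  have starσ := σmap _ _ star
  simp only [map_add, map_sub, map_neg, map_mul, map_ofNat, σR_s, σR_σR] at starσ
  have hA3 : 3 * d1 + 2 * sR * d2 = 0 := by
    linear_combination -starσ + 2 * star - 2 * sR * hσd2
  obtain ⟨g, hg⟩ := three_dvd_of d1 d2 hA3
  have hσd2g : σR d2 = 3 * σR g := by rw [hg, map_mul, map_ofNat]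
  have hσg : σR g = -g := by
    have h30 : 3 * (σR g + g) = 0 := by linear_combination -hσd2g + hσd2 - hg
    have := cancel3 _ h30
    linear_combination this
  have hd1 : d1 = -2 * sR * g := by
    have h31 : 3 * (d1 + 2 * sR * g) = 0 := by linear_combination hA3 - 2 * sR * hg
    have := cancel3 _ h31
    linear_combination this
  have hσd1 : σR d1 = -2 * sR * g := by
    linear_combination star - 2 * hd1 - 2 * sR * hg
  have hc2 : c2 = -(sR * g) := by
    linear_combination -e3 - hσd1 + sR * hσd2 - sR * hg
  have hσc2 : σR c2 = -(sR * g) := by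
    linear_combination -e3' - hd1 - sR * hg
  have hB : c1 = d0 - σR d0 + sR ^ 2 * g := by
    linear_combination -e2 + e4 + sR * hσd1 - sR ^ 2 * hσd2 + sR ^ 2 * hg
  have hBσ := σmap _ _ hB
  simp only [map_add, map_sub, map_neg, map_mul, map_pow, σR_s, σR_σR] at hBσ
  -- hBσ : σR c1 = σR d0 - d0 + sR ^ 2 * σR g
  have hσd0 : σR d0 = 2 * d0 := by
    linear_combination e4 - hBσ + sR * hσc2 - sR ^ 2 * hσg
  have hσd0σ := σmap _ _ hσd0
  simp only [map_mul, map_ofNat, σR_σR] at hσd0σ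
  have hd0 : d0 = 0 := by
    apply cancel3
    linear_combination -hσd0σ - 2 * hσd0
  have hσd0' : σR d0 = 0 := by rw [hd0, map_zero]
  have hc1 : c1 = sR ^ 2 * g := by
    linear_combination hB + hd0 - hσd0'
  have hσc1 : σR c1 = -(sR ^ 2 * g) := by
    linear_combination hBσ + hσd0' - hd0 + sR ^ 2 * hσg
  have hσc0 : σR c0 = c0 := by
    linear_combination e1 + sR * hσc1 - sR ^ 2 * hσc2
  refine ⟨c0, g, hσc0, hσg, ?_⟩
  apply φB_inj
  rw [map_add, map_mul, φB_evB, φB_evB, φB_pB, ha, hc1, hc2, hd0, hd1, hg]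
  simp only [map_mul, map_neg, map_pow, map_zero, map_ofNat, show amA sR = sA from rfl]
  ring

end Tau

end

noncomputable section

theorem Bring_invariants' (τ : Bring ≃+* Bring)
    (h1 : τ (zB 0) = -zB 2) (h2 : τ (zB 1) = -zB 0) (h3 : τ (zB 2) = -zB 1) :
    AlgebraicIndependent ℤ ![σ₁B, σ₃B] ∧
    (∀ f g : MvPolynomial (Fin 2) ℤ, evB f + evB g * pB = 0 → f = 0 ∧ g = 0) ∧
    (∀ x : Bring, τ x = x ↔
      ∃ f g : MvPolynomial (Fin 2) ℤ,
        (∀ m ∈ f.support, Even (m 0 + 3 * m 1)) ∧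
        (∀ m ∈ g.support, Odd (m 0 + 3 * m 1)) ∧
        x = evB f + evB g * pB) := by
  refine ⟨?_, part2, fun x => ⟨fun hx => ?_, ?_⟩⟩
  · have hinj : Function.Injective (MvPolynomial.aeval (R := ℤ) ![σ₁B, σ₃B]) := by
      rw [injective_iff_map_eq_zero]
      intro f hf
      refine (part2 f 0 ?_).1
      have : evB f = 0 := hf
      rw [this, show evB 0 = 0 from map_zero (MvPolynomial.aeval ![σ₁B, σ₃B]), zero_mul, add_zero]
    exact hinj
  · obtain ⟨f, g, hf, hg, hrep⟩ := fixed_rep h1 h2 h3 x hx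
    exact ⟨f, g, (even_iff_σR f).mpr hf, (odd_iff_σR g).mpr hg, hrep⟩
  · rintro ⟨f, g, hf, hg, rfl⟩
    rw [map_add, map_mul, τevB h1 h2 h3, τevB h1 h2 h3, τpB h1 h2 h3,
      (even_iff_σR f).mp hf, (odd_iff_σR g).mp hg]
    have : evB (-g) = -evB g := map_neg (MvPolynomial.aeval ![σ₁B, σ₃B]) g
    rw [this]
    ring

end

/-- In `B = ℤ[z₁,z₂,z₃]/(z₁z₂+z₂z₃+z₃z₁)` with `τ` the automorphism
`z₁ ↦ −z₃, z₂ ↦ −z₁, z₃ ↦ −z₂`: (i) `σ₁, σ₃` are algebraically independent over `ℤ` and the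
`ℤ[σ₁,σ₃]`-submodule generated by `1` and `p` is free with basis `{1, p}`; (ii) the fixed
subring of `τ` consists exactly of the elements `f(σ₁,σ₃) + g(σ₁,σ₃)·p` where every monomial
`S^aT^b` of `f` has `a+3b` even and every monomial `S^aT^b` of `g` has `a+3b` odd. -/
theorem Bring_invariants (τ : Bring ≃+* Bring)
    (h1 : τ (zB 0) = -zB 2) (h2 : τ (zB 1) = -zB 0) (h3 : τ (zB 2) = -zB 1) :
    AlgebraicIndependent ℤ ![σ₁B, σ₃B] ∧
    (∀ f g : MvPolynomial (Fin 2) ℤ, evB f + evB g * pB = 0 → f = 0 ∧ g = 0) ∧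
    (∀ x : Bring, τ x = x ↔
      ∃ f g : MvPolynomial (Fin 2) ℤ,
        (∀ m ∈ f.support, Even (m 0 + 3 * m 1)) ∧
        (∀ m ∈ g.support, Odd (m 0 + 3 * m 1)) ∧
        x = evB f + evB g * pB) :=
  Bring_invariants' τ h1 h2 h3
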